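/- Let (A,B) be a monotone pair in Mₙ(ℂ) and let Φ : Mₙ(ℂ) → M_d(ℂ) be a unital positive linear map. Then there exists a unitary V ∈ M_d(ℂ) such that Φ(A)Φ(B)Φ(A) ≤ V Φ(ABA) V*. -/

import Mathlib

open scoped Matrix ComplexOrder

/-- `A^p` for a matrix, via continuous functional calculus with the real power function. -/
noncomputable def mpow {n : ℕ} (A : Matrix (Fin n) (Fin n) ℂ) (p : ℝ) : Matrix (Fin n) (Fin n) ℂ :=
  cfc (fun x : ℝ => x ^ p) A

/-- Matrix absolute value `|X| = (XᴴX)^{1/2}`. -/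
noncomputable def matAbs {n : ℕ} (X : Matrix (Fin n) (Fin n) ℂ) : Matrix (Fin n) (Fin n) ℂ :=
  cfc Real.sqrt (Xᴴ * X)

/-- Loewner order: `X ≤ Y` iff `Y - X` is positive semidefinite. -/
def loewnerLE {n : ℕ} (X Y : Matrix (Fin n) (Fin n) ℂ) : Prop := (Y - X).PosSemidef

/-- `(A, B)` is a monotone pair: `A = f(C)`, `B = g(C)` for some positive semidefinite `C` and
nonnegative nondecreasing functions `f`, `g` on `[0, ∞)`. -/
def MonotonePair {n : ℕ} (A B : Matrix (Fin n) (Fin n) ℂ) : Prop :=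
  ∃ (C : Matrix (Fin n) (Fin n) ℂ) (f g : ℝ → ℝ), C.PosSemidef ∧
    MonotoneOn f (Set.Ici 0) ∧ MonotoneOn g (Set.Ici 0) ∧
    (∀ x ∈ Set.Ici (0 : ℝ), 0 ≤ f x) ∧ (∀ x ∈ Set.Ici (0 : ℝ), 0 ≤ g x) ∧
    A = cfc f C ∧ B = cfc g C

section
open Finset Module

namespace ChebAux

/-- Weighted Chebyshev-type sum inequality. -/
lemma wchebyshev {N : ℕ} (p a b : Fin N → ℝ) (hp : ∀ i, 0 ≤ p i)
    (hab : ∀ i j, 0 ≤ (a i - a j) * (b i - b j)) :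
    (∑ i, p i * a i) * (∑ i, p i * b i) ≤ (∑ i, p i) * (∑ i, p i * (a i * b i)) := by
  have key : 0 ≤ ∑ i, ∑ j, p i * p j * ((a i - a j) * (b i - b j)) := by
    refine Finset.sum_nonneg fun i _ => Finset.sum_nonneg fun j _ => ?_
    exact mul_nonneg (mul_nonneg (hp i) (hp j)) (hab i j)
  have expand : ∀ i j : Fin N, p i * p j * ((a i - a j) * (b i - b j)) =
      (p i * (a i * b i)) * p j + p i * (p j * (a j * b j))
        - ((p i * a i) * (p j * b j) + (p i * b i) * (p j * a j)) := by
    intro i j; ring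
  rw [Finset.sum_congr rfl fun i _ => Finset.sum_congr rfl fun j _ => expand i j] at key
  simp only [Finset.sum_sub_distrib, Finset.sum_add_distrib, ← Finset.sum_mul, ← Finset.mul_sum]
  at key
  nlinarith [key]



variable {d : ℕ}

/-- Real quadratic form of a matrix. -/
noncomputable def qf (M : Matrix (Fin d) (Fin d) ℂ) (w : Fin d → ℂ) : ℝ :=
  (dotProduct (star w) (M *ᵥ w)).re

lemma qf_add (M N : Matrix (Fin d) (Fin d) ℂ) (w : Fin d → ℂ) :
    qf (M + N) w = qf M w + qf N w := by
  simp [qf, Matrix.add_mulVec, dotProduct_add]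

lemma qf_zero (w : Fin d → ℂ) : qf (0 : Matrix (Fin d) (Fin d) ℂ) w = 0 := by
  simp [qf]

lemma qf_real_smul (r : ℝ) (M : Matrix (Fin d) (Fin d) ℂ) (w : Fin d → ℂ) :
    qf ((r : ℂ) • M) w = r * qf M w := by
  simp [qf, Matrix.smul_mulVec, dotProduct_smul, Complex.re_ofReal_mul]

lemma qf_sum {ι : Type*} (s : Finset ι) (M : ι → Matrix (Fin d) (Fin d) ℂ) (w : Fin d → ℂ) :
    qf (∑ i ∈ s, M i) w = ∑ i ∈ s, qf (M i) w := by
  classical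
  induction s using Finset.induction_on with
  | empty => simp [qf_zero]
  | insert _ _ h ih => rw [Finset.sum_insert h, Finset.sum_insert h, qf_add, ih]

lemma qf_nonneg {M : Matrix (Fin d) (Fin d) ℂ} (hM : M.PosSemidef) (w : Fin d → ℂ) :
    0 ≤ qf M w := hM.re_dotProduct_nonneg w

/-- norm squared -/
noncomputable def nsq (w : Fin d → ℂ) : ℝ := (dotProduct (star w) w).re

lemma nsq_eq_sum (w : Fin d → ℂ) : nsq w = ∑ i, Complex.normSq (w i) := by
  simp only [nsq, dotProduct, Complex.re_sum, Pi.star_apply]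
  refine Finset.sum_congr rfl fun i _ => ?_
  rw [mul_comm, Complex.star_def, Complex.mul_conj, Complex.ofReal_re]

lemma nsq_nonneg (w : Fin d → ℂ) : 0 ≤ nsq w := by
  rw [nsq_eq_sum]; exact Finset.sum_nonneg fun i _ => Complex.normSq_nonneg _

lemma nsq_eq_zero {w : Fin d → ℂ} (h : nsq w = 0) : w = 0 := by
  rw [nsq_eq_sum] at h
  funext i
  have := (Finset.sum_eq_zero_iff_of_nonneg (fun i _ => Complex.normSq_nonneg (w i))).1 h i
    (Finset.mem_univ i)
  simpa [Complex.normSq_eq_zero] using this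

lemma qf_one (w : Fin d → ℂ) : qf (1 : Matrix (Fin d) (Fin d) ℂ) w = nsq w := by
  simp [qf, nsq]

/-- Key: quadratic form through a unitary conjugation of a real diagonal. -/
lemma qf_unitary_diag {U : Matrix (Fin d) (Fin d) ℂ}
    (μ : Fin d → ℝ) (v : Fin d → ℂ) :
    qf (U * Matrix.diagonal (fun i => (μ i : ℂ)) * star U) v
      = ∑ i, μ i * Complex.normSq ((star U *ᵥ v) i) := by
  set c := star U *ᵥ v with hc
  have h1 : (U * Matrix.diagonal (fun i => (μ i : ℂ)) * star U) *ᵥ v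
      = U *ᵥ (Matrix.diagonal (fun i => (μ i : ℂ)) *ᵥ c) := by
    simp [Matrix.mulVec_mulVec, Matrix.mul_assoc, hc]
  have h2 : star v ᵥ* U = star c := by
    rw [hc, Matrix.star_mulVec, Matrix.star_eq_conjTranspose, Matrix.conjTranspose_conjTranspose]
  rw [qf, h1, Matrix.dotProduct_mulVec, h2]
  simp only [dotProduct, Complex.re_sum, Matrix.mulVec_diagonal, Pi.star_apply]
  refine Finset.sum_congr rfl fun i _ => ?_
  have : star (c i) * ((μ i : ℂ) * c i) = (μ i : ℂ) * ((c i) * star (c i)) := by ring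
  rw [this, Complex.star_def, Complex.mul_conj, ← Complex.ofReal_mul, Complex.ofReal_re]




variable {k : ℕ}

/-- Coordinate subspace supported on `S`. -/
noncomputable def coordSub (S : Finset (Fin k)) : Submodule ℂ (Fin k → ℂ) where
  carrier := {c | ∀ i, i ∉ S → c i = 0}
  add_mem' := by intro a b ha hb i hi; simp [ha i hi, hb i hi]
  zero_mem' := by intro i _; rfl
  smul_mem' := by intro r a ha i hi; simp [ha i hi]

lemma mem_coordSub {S : Finset (Fin k)} {c : Fin k → ℂ} :
    c ∈ coordSub S ↔ ∀ i, i ∉ S → c i = 0 := Iff.rfl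

/-- Linear equivalence with functions on `S`. -/
noncomputable def coordSubEquiv (S : Finset (Fin k)) : coordSub S ≃ₗ[ℂ] (↥S → ℂ) where
  toFun c := fun i => c.1 i.1
  map_add' := by intros; rfl
  map_smul' := by intros; rfl
  invFun a := ⟨fun i => if h : i ∈ S then a ⟨i, h⟩ else 0, fun i hi => dif_neg hi⟩
  left_inv := by
    intro c
    ext i
    by_cases h : i ∈ S
    · simp [h]
    · simp [h, c.2 i h]
  right_inv := by
    intro a
    funext i
    simp [i.2]

lemma finrank_coordSub (S : Finset (Fin k)) : finrank ℂ (coordSub S) = S.card := by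
  rw [LinearEquiv.finrank_eq (coordSubEquiv S), Module.finrank_fintype_fun_eq_card,
    Fintype.card_coe]




variable {d : ℕ} {U : Matrix (Fin d) (Fin d) ℂ} {μ : Fin d → ℝ}

lemma starU_mulVec (hU : star U * U = 1) (c : Fin d → ℂ) :
    star U *ᵥ (U *ᵥ c) = c := by
  rw [Matrix.mulVec_mulVec, hU, Matrix.one_mulVec]

lemma nsq_unitary_mulVec (hU : star U * U = 1) (c : Fin d → ℂ) :
    nsq (U *ᵥ c) = ∑ i, Complex.normSq (c i) := by
  have h : star (U *ᵥ c) ⬝ᵥ (U *ᵥ c) = star c ⬝ᵥ c := by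
    rw [Matrix.star_mulVec, ← Matrix.dotProduct_mulVec, Matrix.mulVec_mulVec,
      ← Matrix.star_eq_conjTranspose, hU, Matrix.one_mulVec]
  rw [nsq, h, ← nsq, nsq_eq_sum]

/-- Image of a coordinate subspace under a matrix. -/
noncomputable def spanOf (V : Matrix (Fin d) (Fin d) ℂ) (S : Finset (Fin d)) :
    Submodule ℂ (Fin d → ℂ) :=
  Submodule.map (Matrix.mulVecLin V) (coordSub S)

lemma mem_spanOf {V : Matrix (Fin d) (Fin d) ℂ} {S : Finset (Fin d)} {w : Fin d → ℂ} :
    w ∈ spanOf V S ↔ ∃ c ∈ coordSub S, V *ᵥ c = w := by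
  simp [spanOf, Submodule.mem_map, Matrix.mulVecLin_apply]

lemma finrank_spanOf (hU : star U * U = 1) (hU' : U * star U = 1) (S : Finset (Fin d)) :
    finrank ℂ (spanOf U S) = S.card := by
  let e : (Fin d → ℂ) ≃ₗ[ℂ] (Fin d → ℂ) :=
    LinearEquiv.ofLinear (Matrix.mulVecLin U) (Matrix.mulVecLin (star U))
      (by rw [← Matrix.mulVecLin_mul, hU', Matrix.mulVecLin_one])
      (by rw [← Matrix.mulVecLin_mul, hU, Matrix.mulVecLin_one])
  have : spanOf U S = Submodule.map (e : (Fin d → ℂ) →ₗ[ℂ] (Fin d → ℂ)) (coordSub S) := rfl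
  rw [this, LinearEquiv.finrank_map_eq, finrank_coordSub]

lemma qf_ge_on_spanOf (hU : star U * U = 1) {S : Finset (Fin d)} {lam : ℝ}
    (hS : ∀ i ∈ S, lam ≤ μ i) {w : Fin d → ℂ} (hw : w ∈ spanOf U S) :
    lam * nsq w ≤ qf (U * Matrix.diagonal (fun i => (μ i : ℂ)) * star U) w := by
  obtain ⟨c, hc, rfl⟩ := mem_spanOf.1 hw
  rw [qf_unitary_diag μ _, starU_mulVec hU, nsq_unitary_mulVec hU, Finset.mul_sum]
  refine Finset.sum_le_sum fun i _ => ?_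
  by_cases hi : i ∈ S
  · exact mul_le_mul_of_nonneg_right (hS i hi) (Complex.normSq_nonneg _)
  · simp [hc i hi]

lemma qf_lt_on_spanOf (hU : star U * U = 1) {S : Finset (Fin d)} {lam : ℝ}
    (hS : ∀ i ∈ S, μ i < lam) {w : Fin d → ℂ} (hw : w ∈ spanOf U S) (hw0 : w ≠ 0) :
    qf (U * Matrix.diagonal (fun i => (μ i : ℂ)) * star U) w < lam * nsq w := by
  obtain ⟨c, hc, rfl⟩ := mem_spanOf.1 hw
  have hc0 : c ≠ 0 := by
    rintro rfl; exact hw0 (by simp)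
  obtain ⟨i₀, hi₀⟩ : ∃ i, c i ≠ 0 := by
    by_contra h; push_neg at h; exact hc0 (funext h)
  have hi₀S : i₀ ∈ S := by
    by_contra h; exact hi₀ (hc i₀ h)
  rw [qf_unitary_diag μ _, starU_mulVec hU, nsq_unitary_mulVec hU, Finset.mul_sum]
  refine Finset.sum_lt_sum (fun i _ => ?_) ⟨i₀, Finset.mem_univ i₀, ?_⟩
  · by_cases hi : i ∈ S
    · exact mul_le_mul_of_nonneg_right (le_of_lt (hS i hi)) (Complex.normSq_nonneg _)
    · simp [hc i hi]
  · have : 0 < Complex.normSq (c i₀) := by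
      simpa [pos_iff_ne_zero, Complex.normSq_eq_zero] using hi₀
    exact mul_lt_mul_of_pos_right (hS i₀ hi₀S) this

lemma count_ge_of_subspace (hU : star U * U = 1) (hU' : U * star U = 1)
    (W : Submodule ℂ (Fin d → ℂ)) {lam : ℝ} (hlam : 0 < lam)
    (hW : ∀ w ∈ W, lam * nsq w ≤ qf (U * Matrix.diagonal (fun i => (μ i : ℂ)) * star U) w) :
    finrank ℂ W ≤ (Finset.univ.filter (fun i => lam ≤ μ i)).card := by
  set S : Finset (Fin d) := Finset.univ.filter (fun i => lam ≤ μ i) with hSdef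
  by_contra hcon
  push_neg at hcon
  set Z : Submodule ℂ (Fin d → ℂ) := spanOf U Sᶜ with hZdef
  have hZrank : finrank ℂ Z = d - S.card := by
    rw [hZdef, finrank_spanOf hU hU', Finset.card_compl, Fintype.card_fin]
  have hScard : S.card ≤ d := by simpa using Finset.card_le_card (Finset.subset_univ S)
  have htot : finrank ℂ (Fin d → ℂ) = d := by
    rw [Module.finrank_fintype_fun_eq_card, Fintype.card_fin]
  have hsum : finrank ℂ (W ⊔ Z : Submodule ℂ (Fin d → ℂ)) + finrank ℂ (W ⊓ Z : Submodule ℂ (Fin d → ℂ))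
      = finrank ℂ W + finrank ℂ Z := Submodule.finrank_sup_add_finrank_inf_eq W Z
  have hle : finrank ℂ (W ⊔ Z : Submodule ℂ (Fin d → ℂ)) ≤ d :=
    le_trans (Submodule.finrank_le _) (le_of_eq htot)
  have hpos : 0 < finrank ℂ (W ⊓ Z : Submodule ℂ (Fin d → ℂ)) := by omega
  obtain ⟨x, hx0⟩ := Module.finrank_pos_iff_exists_ne_zero.1 hpos
  have hxW : (x : Fin d → ℂ) ∈ W := x.2.1
  have hxZ : (x : Fin d → ℂ) ∈ Z := x.2.2
  have hxne : (x : Fin d → ℂ) ≠ 0 := by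
    simpa [Submodule.coe_eq_zero] using hx0
  have h1 := hW _ hxW
  have h2 := qf_lt_on_spanOf hU (S := Sᶜ) (lam := lam) (fun i hi => by
      simp only [hSdef, Finset.mem_compl, Finset.mem_filter, Finset.mem_univ, true_and] at hi
      exact lt_of_not_ge hi) hxZ hxne
  linarith

end ChebAux

namespace ChebAux

section Pieces

variable {n : ℕ}

/-- Spectral piece `U e_i e_i^* U^*`. -/
noncomputable def rpiece (U : Matrix (Fin n) (Fin n) ℂ) (i : Fin n) : Matrix (Fin n) (Fin n) ℂ :=
  U * Matrix.diagonal (fun j => if j = i then (1 : ℂ) else 0) * star U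

lemma rpiece_posSemidef {U : Matrix (Fin n) (Fin n) ℂ} (i : Fin n) :
    (rpiece U i).PosSemidef := by
  have hdiag : (Matrix.diagonal (fun j => if j = i then (1 : ℂ) else 0)).PosSemidef := by
    refine Matrix.posSemidef_diagonal_iff.mpr fun j => ?_
    split_ifs <;> simp
  have := hdiag.mul_mul_conjTranspose_same U
  simpa [rpiece, Matrix.star_eq_conjTranspose] using this

lemma sum_diag_single :
    ∑ i : Fin n, Matrix.diagonal (fun j => if j = i then (1 : ℂ) else 0) = 1 := by
  ext j k
  by_cases hjk : j = k
  · subst hjk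
    simp [Matrix.sum_apply, Matrix.diagonal_apply, Matrix.one_apply]
  · simp [Matrix.sum_apply, Matrix.diagonal_apply, Matrix.one_apply, hjk]

lemma sum_rpiece {U : Matrix (Fin n) (Fin n) ℂ} (hU' : U * star U = 1) :
    ∑ i : Fin n, rpiece U i = 1 := by
  have h : ∑ i : Fin n, rpiece U i
      = U * (∑ i : Fin n, Matrix.diagonal (fun j => if j = i then (1 : ℂ) else 0)) * star U := by
    simp only [rpiece]
    rw [← Finset.sum_mul, ← Finset.mul_sum]
  rw [h, sum_diag_single, mul_one, hU']

lemma diag_decomp (U : Matrix (Fin n) (Fin n) ℂ) (h : Fin n → ℝ) :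
    U * Matrix.diagonal (fun i => (h i : ℂ)) * star U = ∑ i, (h i : ℂ) • rpiece U i := by
  have hd : Matrix.diagonal (fun i => (h i : ℂ))
      = ∑ i : Fin n, (h i : ℂ) • Matrix.diagonal (fun j => if j = i then (1 : ℂ) else 0) := by
    ext j k
    by_cases hjk : j = k
    · subst hjk
      simp [Matrix.sum_apply, Matrix.diagonal_apply, mul_ite]
    · simp [Matrix.sum_apply, Matrix.diagonal_apply, hjk]
  rw [hd, Finset.mul_sum, Finset.sum_mul]
  refine Finset.sum_congr rfl fun i _ => ?_
  rw [Matrix.mul_smul, Matrix.smul_mul, rpiece]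

end Pieces

section Phi

variable {n d : ℕ} (Φ : Matrix (Fin n) (Fin n) ℂ →ₗ[ℂ] Matrix (Fin d) (Fin d) ℂ)

lemma qf_phi (U : Matrix (Fin n) (Fin n) ℂ) (h : Fin n → ℝ) (w : Fin d → ℂ) :
    qf (Φ (U * Matrix.diagonal (fun i => (h i : ℂ)) * star U)) w
      = ∑ i, h i * qf (Φ (rpiece U i)) w := by
  rw [diag_decomp, map_sum]
  rw [qf_sum]
  refine Finset.sum_congr rfl fun i _ => ?_
  rw [map_smul, qf_real_smul]

end Phi

section Conj

variable {d : ℕ}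

/-- Conjugation identity for quadratic forms: `⟨u, XMX u⟩ = ⟨Xu, M (Xu)⟩` for Hermitian `X`. -/
lemma qf_conj {X M : Matrix (Fin d) (Fin d) ℂ} (hX : X.IsHermitian) (u : Fin d → ℂ) :
    qf (X * M * X) u = qf M (X *ᵥ u) := by
  unfold qf
  congr 1
  rw [Matrix.star_mulVec, hX.eq, ← Matrix.dotProduct_mulVec, Matrix.mulVec_mulVec,
    Matrix.mulVec_mulVec]

lemma conj_mul_conj {U : Matrix (Fin d) (Fin d) ℂ} (hU : star U * U = 1)
    (D E : Matrix (Fin d) (Fin d) ℂ) :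
    (U * D * star U) * (U * E * star U) = U * (D * E) * star U := by
  have : U * D * star U * (U * E * star U) = U * D * (star U * U) * E * star U := by
    simp only [Matrix.mul_assoc]
  rw [this, hU, mul_one, Matrix.mul_assoc U D E]

end Conj

section Perm

variable {d : ℕ}

/-- Permutation matrix. -/
noncomputable def pmat (σ : Equiv.Perm (Fin d)) : Matrix (Fin d) (Fin d) ℂ :=
  Matrix.of fun k l => if σ k = l then (1 : ℂ) else 0

lemma pmat_mul_star (σ : Equiv.Perm (Fin d)) : pmat σ * star (pmat σ) = 1 := by
  ext k m
  simp only [pmat, Matrix.mul_apply, Matrix.star_apply, Matrix.one_apply, Matrix.of_apply]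
  rw [Finset.sum_congr rfl (fun l _ => by
    rw [show ((if σ k = l then (1:ℂ) else 0) * star (if σ m = l then (1:ℂ) else 0))
      = (if σ k = l then (if σ m = l then (1:ℂ) else 0) else 0) by split_ifs <;> simp])]
  rw [Finset.sum_ite_eq Finset.univ (σ k) (fun l => if σ m = l then (1:ℂ) else 0)]
  simp [Equiv.apply_eq_iff_eq, eq_comm]

lemma pmat_conj_diag (σ : Equiv.Perm (Fin d)) (v : Fin d → ℂ) :
    pmat σ * Matrix.diagonal v * star (pmat σ) = Matrix.diagonal (fun k => v (σ k)) := by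
  ext k m
  simp only [pmat, Matrix.mul_apply, Matrix.star_apply, Matrix.of_apply, Matrix.diagonal_apply]
  rw [Finset.sum_congr rfl (fun l _ => by
    rw [show (∑ j, (if σ k = j then (1:ℂ) else 0) * (if j = l then v j else 0))
        * star (if σ m = l then (1:ℂ) else 0)
      = (if σ k = l then (if σ m = l then v l else 0) else 0) by
        rw [Finset.sum_congr rfl (fun j _ => by
          rw [show (if σ k = j then (1:ℂ) else 0) * (if j = l then v j else 0)
            = (if σ k = j then (if j = l then v j else 0) else 0) by split_ifs <;> simp])]
        rw [Finset.sum_ite_eq Finset.univ (σ k) (fun j => if j = l then v j else 0)]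
        split_ifs <;> simp_all])]
  rw [Finset.sum_ite_eq Finset.univ (σ k) (fun l => if σ m = l then v l else 0)]
  simp only [Finset.mem_univ, if_true]
  by_cases hkm : k = m
  · subst hkm; simp
  · have : σ m ≠ σ k := fun h => hkm (σ.injective h).symm
    simp [this, hkm]

end Perm

section Sorting

variable {d : ℕ}

lemma card_filter_comp (σ : Equiv.Perm (Fin d)) (pr : Fin d → Prop) [DecidablePred pr] :
    (Finset.univ.filter fun j => pr (σ j)).card = (Finset.univ.filter pr).card := by
  refine Finset.card_bij (fun j _ => σ j) (fun j hj => ?_) (fun a ha b hb hab => ?_)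
    (fun i hi => ?_)
  · simp only [Finset.mem_filter, Finset.mem_univ, true_and] at hj ⊢; exact hj
  · exact σ.injective hab
  · refine ⟨σ.symm i, ?_, by simp⟩
    simp only [Finset.mem_filter, Finset.mem_univ, true_and] at hi ⊢
    simpa using hi

lemma exists_perm_le (p q : Fin d → ℝ) (hq : ∀ i, 0 ≤ q i)
    (hcount : ∀ lam : ℝ, 0 < lam →
      (Finset.univ.filter fun i => lam ≤ p i).card ≤ (Finset.univ.filter fun i => lam ≤ q i).card) :
    ∃ σ : Equiv.Perm (Fin d), ∀ k, p k ≤ q (σ k) := by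
  set σp := Tuple.sort p with hσp
  set σq := Tuple.sort q with hσq
  have hmp : Monotone (p ∘ σp) := Tuple.monotone_sort p
  have hmq : Monotone (q ∘ σq) := Tuple.monotone_sort q
  have claim : ∀ k, p (σp k) ≤ q (σq k) := by
    intro k
    by_contra hlt
    push_neg at hlt
    set lam := p (σp k) with hlam_def
    have hlam : 0 < lam := lt_of_le_of_lt (hq _) hlt
    have h1 : Finset.Ici k ⊆ Finset.univ.filter (fun j => lam ≤ p (σp j)) := by
      intro j hj
      simp only [Finset.mem_filter, Finset.mem_univ, true_and]
      exact hmp (Finset.mem_Ici.1 hj)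
    have h2 : Finset.univ.filter (fun j => lam ≤ q (σq j)) ⊆ Finset.Ioi k := by
      intro j hj
      simp only [Finset.mem_filter, Finset.mem_univ, true_and] at hj
      rw [Finset.mem_Ioi]
      by_contra hjk
      push_neg at hjk
      exact absurd (le_trans hj (hmq hjk)) (not_le.2 hlt)
    have c1 := Finset.card_le_card h1
    have c2 := Finset.card_le_card h2
    rw [Fin.card_Ici] at c1
    rw [Fin.card_Ioi] at c2
    rw [card_filter_comp σp (fun i => lam ≤ p i)] at c1
    rw [card_filter_comp σq (fun i => lam ≤ q i)] at c2
    have := hcount lam hlam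
    have hk := k.isLt
    omega
  refine ⟨σp.symm.trans σq, fun k => ?_⟩
  have := claim (σp.symm k)
  simpa using this

end Sorting

end ChebAux


end

open ChebAux

/-- For a monotone pair `(A, B)` and a unital positive linear map `Φ`, there is a unitary `V`
with `Φ(A) Φ(B) Φ(A) ≤ V Φ(ABA) V*`. -/
theorem chebyshev_positive_map {n d : ℕ} (A B : Matrix (Fin n) (Fin n) ℂ)
    (hAB : MonotonePair A B)
    (Φ : Matrix (Fin n) (Fin n) ℂ →ₗ[ℂ] Matrix (Fin d) (Fin d) ℂ)
    (hΦ1 : Φ 1 = 1) (hΦpos : ∀ X : Matrix (Fin n) (Fin n) ℂ, X.PosSemidef → (Φ X).PosSemidef) :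
    ∃ V : Matrix (Fin d) (Fin d) ℂ, V ∈ Matrix.unitaryGroup (Fin d) ℂ ∧
      loewnerLE (Φ A * Φ B * Φ A) (V * Φ (A * B * A) * Vᴴ) := by
  classical
  obtain ⟨C, f, g, hC, hf, hg, hf0, hg0, hA, hB⟩ := hAB
  have hCh : C.IsHermitian := hC.1
  set Un : Matrix (Fin n) (Fin n) ℂ := (hCh.eigenvectorUnitary : Matrix (Fin n) (Fin n) ℂ)
    with hUndef
  have hUn : star Un * Un = 1 := Matrix.mem_unitaryGroup_iff'.mp hCh.eigenvectorUnitary.2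
  have hUn' : Un * star Un = 1 := Matrix.mem_unitaryGroup_iff.mp hCh.eigenvectorUnitary.2
  set ε : Fin n → ℝ := hCh.eigenvalues with hεdef
  have hε : ∀ i, 0 ≤ ε i := fun i => hC.eigenvalues_nonneg i
  set F : Fin n → ℝ := fun i => f (ε i) with hFdef
  set G : Fin n → ℝ := fun i => g (ε i) with hGdef
  have hFnn : ∀ i, 0 ≤ F i := fun i => hf0 _ (hε i)
  have hGnn : ∀ i, 0 ≤ G i := fun i => hg0 _ (hε i)
  have hFmono : ∀ i j, ε i ≤ ε j → F i ≤ F j := fun i j hij => hf (hε i) (hε j) hij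
  have hGmono : ∀ i j, ε i ≤ ε j → G i ≤ G j := fun i j hij => hg (hε i) (hε j) hij
  have hAe : A = Un * Matrix.diagonal (fun i => (F i : ℂ)) * star Un := by
    rw [hA, hCh.cfc_eq, Matrix.IsHermitian.cfc]; rfl
  have hBe : B = Un * Matrix.diagonal (fun i => (G i : ℂ)) * star Un := by
    rw [hB, hCh.cfc_eq, Matrix.IsHermitian.cfc]; rfl
  have hABAe : A * B * A
      = Un * Matrix.diagonal (fun i => ((F i * G i * F i : ℝ) : ℂ)) * star Un := by
    rw [hAe, hBe, conj_mul_conj hUn, conj_mul_conj hUn,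
      Matrix.diagonal_mul_diagonal, Matrix.diagonal_mul_diagonal]
    congr 2
    funext i
    push_cast
    ring
  have hdiagPSD : ∀ (h : Fin n → ℝ), (∀ i, 0 ≤ h i) →
      (Un * Matrix.diagonal (fun i => (h i : ℂ)) * star Un).PosSemidef := by
    intro h hh
    have hd : (Matrix.diagonal (fun i => (h i : ℂ))).PosSemidef :=
      Matrix.posSemidef_diagonal_iff.mpr fun i => Complex.zero_le_real.2 (hh i)
    simpa [Matrix.star_eq_conjTranspose] using hd.mul_mul_conjTranspose_same Un
  have hApsd : A.PosSemidef := hAe ▸ hdiagPSD F hFnn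
  have hBpsd : B.PosSemidef := hBe ▸ hdiagPSD G hGnn
  have hABApsd : (A * B * A).PosSemidef := hABAe ▸ hdiagPSD _ (fun i =>
    mul_nonneg (mul_nonneg (hFnn i) (hGnn i)) (hFnn i))
  set X : Matrix (Fin d) (Fin d) ℂ := Φ A with hXdef
  set Bm : Matrix (Fin d) (Fin d) ℂ := Φ B with hBmdef
  set Q : Matrix (Fin d) (Fin d) ℂ := Φ (A * B * A) with hQdef
  set P : Matrix (Fin d) (Fin d) ℂ := X * Bm * X with hPdef
  have hXpsd : X.PosSemidef := hΦpos A hApsd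
  have hBmpsd : Bm.PosSemidef := hΦpos B hBpsd
  have hQpsd : Q.PosSemidef := hΦpos _ hABApsd
  have hXh : X.IsHermitian := hXpsd.1
  have hPpsd : P.PosSemidef := by
    have h := hBmpsd.mul_mul_conjTranspose_same X
    rwa [show Xᴴ = X from hXh] at h
  -- weights
  set qw : (Fin d → ℂ) → Fin n → ℝ := fun w i => qf (Φ (rpiece Un i)) w with hqwdef
  have hqw0 : ∀ w i, 0 ≤ qw w i := fun w i =>
    qf_nonneg (hΦpos _ (rpiece_posSemidef i)) w
  have hqwsum : ∀ w, ∑ i, qw w i = nsq w := by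
    intro w
    have h : ∑ i, qw w i = qf (Φ (∑ i, rpiece Un i)) w := by
      rw [map_sum, qf_sum]
    rw [h, sum_rpiece hUn', hΦ1, qf_one]
  have hqfX : ∀ w, qf X w = ∑ i, F i * qw w i := by
    intro w
    rw [hXdef, hAe]
    exact qf_phi Φ Un F w
  have hqfB : ∀ w, qf Bm w = ∑ i, G i * qw w i := by
    intro w
    rw [hBmdef, hBe]
    exact qf_phi Φ Un G w
  have hqfQ : ∀ w, qf Q w = ∑ i, (F i * G i * F i) * qw w i := by
    intro w
    rw [hQdef, hABAe]
    exact qf_phi Φ Un (fun i => F i * G i * F i) w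
  -- the per-vector core inequality
  have core : ∀ (lam : ℝ) (u : Fin d → ℂ), 0 < lam → lam * nsq u ≤ qf P u →
      lam * nsq (X *ᵥ u) ≤ qf Q (X *ᵥ u) := by
    intro lam u hlam hu
    set w : Fin d → ℂ := X *ᵥ u with hwdef
    -- spectral data of X
    set Vx : Matrix (Fin d) (Fin d) ℂ := (hXh.eigenvectorUnitary : Matrix (Fin d) (Fin d) ℂ)
      with hVxdef
    have hVx : star Vx * Vx = 1 := Matrix.mem_unitaryGroup_iff'.mp hXh.eigenvectorUnitary.2
    have hVx' : Vx * star Vx = 1 := Matrix.mem_unitaryGroup_iff.mp hXh.eigenvectorUnitary.2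
    set ξ : Fin d → ℝ := hXh.eigenvalues with hξdef
    have hξ : ∀ j, 0 ≤ ξ j := fun j => hXpsd.eigenvalues_nonneg j
    have hXe : X = Vx * Matrix.diagonal (fun j => (ξ j : ℂ)) * star Vx := by
      conv_lhs => rw [hXh.spectral_theorem]
      rfl
    set ν : Fin d → ℝ := fun j => Complex.normSq ((star Vx *ᵥ u) j) with hνdef
    have hν : ∀ j, 0 ≤ ν j := fun j => Complex.normSq_nonneg _
    set S0 : ℝ := ∑ j, ν j with hS0
    set S1 : ℝ := ∑ j, ξ j * ν j with hS1
    set S2 : ℝ := ∑ j, (ξ j * ξ j) * ν j with hS2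
    set S3 : ℝ := ∑ j, ((ξ j * ξ j) * ξ j) * ν j with hS3
    have hS0nn : 0 ≤ S0 := Finset.sum_nonneg fun j _ => hν j
    have hS1nn : 0 ≤ S1 := Finset.sum_nonneg fun j _ => mul_nonneg (hξ j) (hν j)
    have hS2nn : 0 ≤ S2 := Finset.sum_nonneg fun j _ =>
      mul_nonneg (mul_nonneg (hξ j) (hξ j)) (hν j)
    have hS3nn : 0 ≤ S3 := Finset.sum_nonneg fun j _ =>
      mul_nonneg (mul_nonneg (mul_nonneg (hξ j) (hξ j)) (hξ j)) (hν j)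
    -- moment identifications
    have hm0 : nsq u = S0 := by
      have hu' : Vx *ᵥ (star Vx *ᵥ u) = u := by
        rw [Matrix.mulVec_mulVec, hVx', Matrix.one_mulVec]
      conv_lhs => rw [← hu']
      rw [nsq_unitary_mulVec hVx]
    have hX2 : X * X = Vx * Matrix.diagonal (fun j => ((ξ j * ξ j : ℝ) : ℂ)) * star Vx := by
      rw [hXe, conj_mul_conj hVx, Matrix.diagonal_mul_diagonal]
      congr 2
      funext j
      push_cast
      ring
    have hX3 : X * X * X
        = Vx * Matrix.diagonal (fun j => (((ξ j * ξ j) * ξ j : ℝ) : ℂ)) * star Vx := by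
      rw [hX2]
      conv_lhs => rw [hXe]
      rw [conj_mul_conj hVx, Matrix.diagonal_mul_diagonal]
      congr 2
      funext j
      push_cast
      ring
    have hm2 : nsq w = S2 := by
      have h1 : qf (X * (1 : Matrix (Fin d) (Fin d) ℂ) * X) u = qf 1 w := qf_conj hXh u
      rw [mul_one] at h1
      rw [← qf_one, ← h1, hX2, qf_unitary_diag]
    have hm3 : qf X w = S3 := by
      have h1 : qf (X * X * X) u = qf X w := qf_conj hXh u
      rw [← h1, hX3, qf_unitary_diag]
    -- moment inequalities
    have eA : S2 = ∑ j, (ξ j * ν j) * ξ j := by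
      rw [hS2]; exact Finset.sum_congr rfl fun j _ => by ring
    have eB : S3 = ∑ j, (ξ j * ν j) * (ξ j * ξ j) := by
      rw [hS3]; exact Finset.sum_congr rfl fun j _ => by ring
    have mom1 : S2 * S2 ≤ S1 * S3 := by
      rw [eA, eB, hS1]
      exact wchebyshev (fun j => ξ j * ν j) ξ ξ
        (fun j => mul_nonneg (hξ j) (hν j)) (fun i j => mul_self_nonneg _)
    have eD : S1 = ∑ j, ν j * ξ j := by
      rw [hS1]; exact Finset.sum_congr rfl fun j _ => by ring
    have eE : S2 = ∑ j, ν j * (ξ j * ξ j) := by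
      rw [hS2]; exact Finset.sum_congr rfl fun j _ => by ring
    have eF : S3 = ∑ j, ν j * (ξ j * (ξ j * ξ j)) := by
      rw [hS3]; exact Finset.sum_congr rfl fun j _ => by ring
    have mom2 : S1 * S2 ≤ S0 * S3 := by
      have hab : ∀ i j, 0 ≤ (ξ i - ξ j) * ((fun j => ξ j * ξ j) i - (fun j => ξ j * ξ j) j) := by
        intro i j
        simp only
        calc (0:ℝ) ≤ ((ξ i - ξ j) * (ξ i - ξ j)) * (ξ i + ξ j) :=
              mul_nonneg (mul_self_nonneg _) (add_nonneg (hξ i) (hξ j))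
          _ = (ξ i - ξ j) * (ξ i * ξ i - ξ j * ξ j) := by ring
      rw [eD, eE, hS0, eF]
      exact wchebyshev ν ξ (fun j => ξ j * ξ j) hν hab
    -- Chebyshev inequalities in the weights qw w
    set m : ℝ := nsq w with hm
    set T : ℝ := ∑ i, qw w i * (F i * F i) with hT
    set aa : ℝ := qf X w with haa
    set bb : ℝ := qf Bm w with hbb
    set s : ℝ := qf Q w with hs
    have hFF : ∀ i j, 0 ≤ ((fun i => F i * F i) i - (fun i => F i * F i) j) * (G i - G j) := by
      intro i j
      simp only
      have hprod : 0 ≤ (F i - F j) * (G i - G j) := by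
        rcases le_total (ε i) (ε j) with h | h
        · calc (0:ℝ) ≤ (F j - F i) * (G j - G i) :=
                mul_nonneg (sub_nonneg.2 (hFmono i j h)) (sub_nonneg.2 (hGmono i j h))
            _ = (F i - F j) * (G i - G j) := by ring
        · exact mul_nonneg (sub_nonneg.2 (hFmono j i h)) (sub_nonneg.2 (hGmono j i h))
      calc (0:ℝ) ≤ ((F i - F j) * (G i - G j)) * (F i + F j) :=
            mul_nonneg hprod (add_nonneg (hFnn i) (hFnn j))
        _ = (F i * F i - F j * F j) * (G i - G j) := by ring
    have ebb : bb = ∑ i, qw w i * G i := by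
      rw [hbb, hqfB w]; exact Finset.sum_congr rfl fun i _ => by ring
    have em : m = ∑ i, qw w i := by rw [hm, hqwsum w]
    have es : s = ∑ i, qw w i * ((F i * F i) * G i) := by
      rw [hs, hqfQ w]; exact Finset.sum_congr rfl fun i _ => by ring
    have eaa : aa = ∑ i, qw w i * F i := by
      rw [haa, hqfX w]; exact Finset.sum_congr rfl fun i _ => by ring
    have cheb : T * bb ≤ m * s := by
      rw [hT, ebb, em, es]
      exact wchebyshev (qw w) (fun i => F i * F i) G (hqw0 w) hFF
    have cs : aa * aa ≤ m * T := by
      rw [eaa, em, hT]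
      exact wchebyshev (qw w) F F (hqw0 w) (fun i j => mul_self_nonneg _)
    have hbbP : bb = qf P u := by
      rw [hbb, hPdef, qf_conj hXh u]
    have hbblam : lam * S0 ≤ bb := by
      rw [hbbP, ← hm0]
      exact hu
    have hTnn : 0 ≤ T := Finset.sum_nonneg fun i _ =>
      mul_nonneg (hqw0 w i) (mul_nonneg (hFnn i) (hFnn i))
    have hbbnn : 0 ≤ bb := by
      rw [hbb, hqfB w]
      exact Finset.sum_nonneg fun i _ => mul_nonneg (hGnn i) (hqw0 w i)
    have hsnn : 0 ≤ s := by
      rw [hs, hqfQ w]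
      exact Finset.sum_nonneg fun i _ =>
        mul_nonneg (mul_nonneg (mul_nonneg (hFnn i) (hGnn i)) (hFnn i)) (hqw0 w i)
    -- conclude
    show lam * m ≤ s
    rcases eq_or_lt_of_le (nsq_nonneg w) with hm0' | hmpos
    · rw [hm, ← hm0']
      simpa using hsnn
    · rw [← hm] at hmpos
      have hmeq : m = S2 := hm2
      have haaeq : aa = S3 := hm3
      have e1 : m * (m * m) ≤ (aa * aa) * S0 := by
        rw [hmeq, haaeq]
        calc S2 * (S2 * S2) = (S2 * S2) * S2 := by ring
          _ ≤ (S1 * S3) * S2 := mul_le_mul_of_nonneg_right mom1 hS2nn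
          _ = S3 * (S1 * S2) := by ring
          _ ≤ S3 * (S0 * S3) := mul_le_mul_of_nonneg_left mom2 hS3nn
          _ = (S3 * S3) * S0 := by ring
      have e2 : (aa * aa) * (lam * S0) ≤ (aa * aa) * bb :=
        mul_le_mul_of_nonneg_left hbblam (mul_self_nonneg aa)
      have e3 : (aa * aa) * bb ≤ (m * T) * bb := mul_le_mul_of_nonneg_right cs hbbnn
      have e5 : m * (T * bb) ≤ m * (m * s) := mul_le_mul_of_nonneg_left cheb hmpos.le
      have key : (lam * m) * (m * m) ≤ s * (m * m) := by
        calc (lam * m) * (m * m) = lam * (m * (m * m)) := by ring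
          _ ≤ lam * ((aa * aa) * S0) := mul_le_mul_of_nonneg_left e1 hlam.le
          _ = (aa * aa) * (lam * S0) := by ring
          _ ≤ (aa * aa) * bb := e2
          _ ≤ (m * T) * bb := e3
          _ = m * (T * bb) := by ring
          _ ≤ m * (m * s) := e5
          _ = s * (m * m) := by ring
      exact le_of_mul_le_mul_right key (mul_pos hmpos hmpos)
  -- spectral data of P and Q
  have hPh : P.IsHermitian := hPpsd.1
  have hQh : Q.IsHermitian := hQpsd.1
  set UP : Matrix (Fin d) (Fin d) ℂ := (hPh.eigenvectorUnitary : Matrix (Fin d) (Fin d) ℂ)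
    with hUPdef
  set UQ : Matrix (Fin d) (Fin d) ℂ := (hQh.eigenvectorUnitary : Matrix (Fin d) (Fin d) ℂ)
    with hUQdef
  have hUP : star UP * UP = 1 := Matrix.mem_unitaryGroup_iff'.mp hPh.eigenvectorUnitary.2
  have hUP' : UP * star UP = 1 := Matrix.mem_unitaryGroup_iff.mp hPh.eigenvectorUnitary.2
  have hUQ : star UQ * UQ = 1 := Matrix.mem_unitaryGroup_iff'.mp hQh.eigenvectorUnitary.2
  have hUQ' : UQ * star UQ = 1 := Matrix.mem_unitaryGroup_iff.mp hQh.eigenvectorUnitary.2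
  set pE : Fin d → ℝ := hPh.eigenvalues with hpEdef
  set qE : Fin d → ℝ := hQh.eigenvalues with hqEdef
  have hPe : P = UP * Matrix.diagonal (fun k => (pE k : ℂ)) * star UP := by
    conv_lhs => rw [hPh.spectral_theorem]
    rfl
  have hQe : Q = UQ * Matrix.diagonal (fun k => (qE k : ℂ)) * star UQ := by
    conv_lhs => rw [hQh.spectral_theorem]
    rfl
  have hpnn : ∀ k, 0 ≤ pE k := fun k => hPpsd.eigenvalues_nonneg k
  have hqnn : ∀ k, 0 ≤ qE k := fun k => hQpsd.eigenvalues_nonneg k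
  -- eigenvalue counting
  have countClaim : ∀ lam : ℝ, 0 < lam →
      (Finset.univ.filter fun k => lam ≤ pE k).card
        ≤ (Finset.univ.filter fun k => lam ≤ qE k).card := by
    intro lam hlam
    set S : Finset (Fin d) := Finset.univ.filter (fun k => lam ≤ pE k) with hSdef
    set spanE : Submodule ℂ (Fin d → ℂ) := spanOf UP S with hspanEdef
    have hrankE : Module.finrank ℂ spanE = S.card := finrank_spanOf hUP hUP' S
    have hOnE : ∀ u ∈ spanE, lam * nsq u ≤ qf P u := by
      intro u hu
      have h := qf_ge_on_spanOf (μ := pE) hUP (S := S) (lam := lam)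
        (fun i hi => (Finset.mem_filter.1 hi).2) hu
      rwa [← hPe] at h
    set W : Submodule ℂ (Fin d → ℂ) := Submodule.map (Matrix.mulVecLin X) spanE with hWdef
    have hOnW : ∀ w ∈ W, lam * nsq w ≤ qf Q w := by
      intro w hw
      obtain ⟨u, hu, rfl⟩ := Submodule.mem_map.1 hw
      rw [Matrix.mulVecLin_apply]
      exact core lam u hlam (hOnE u hu)
    have hrankW : Module.finrank ℂ W = S.card := by
      have hker : LinearMap.ker ((Matrix.mulVecLin X).domRestrict spanE) = ⊥ := by
        rw [LinearMap.ker_eq_bot']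
        intro x hx
        have hx0 : X *ᵥ (x : Fin d → ℂ) = 0 := by
          simpa [Matrix.mulVecLin_apply] using hx
        have h1 := hOnE x x.2
        have h2 : qf P (x : Fin d → ℂ) = 0 := by
          have h3 : qf P (x : Fin d → ℂ) = qf Bm (X *ᵥ (x : Fin d → ℂ)) := by
            rw [hPdef, qf_conj hXh]
          rw [h3, hx0]
          simp [qf]
        have h4 : nsq (x : Fin d → ℂ) = 0 := by
          have h5 : lam * nsq (x : Fin d → ℂ) ≤ lam * 0 := by
            rw [mul_zero, ← h2]; exact h1
          exact le_antisymm ((mul_le_mul_iff_right₀ hlam).mp h5) (nsq_nonneg _)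
        exact Subtype.ext (nsq_eq_zero h4)
      have hrange : LinearMap.range ((Matrix.mulVecLin X).domRestrict spanE) = W := by
        rw [LinearMap.range_domRestrict]
      have hrn := LinearMap.finrank_range_add_finrank_ker ((Matrix.mulVecLin X).domRestrict spanE)
      rw [hrange, hker, finrank_bot, add_zero] at hrn
      rw [hrn, hrankE]
    have hfin := count_ge_of_subspace (μ := qE) hUQ hUQ' W hlam (fun w hw => by
      have h := hOnW w hw
      rwa [hQe] at h)
    rw [hrankW] at hfin
    exact hfin
  obtain ⟨σ, hσ⟩ := exists_perm_le pE qE hqnn countClaim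
  -- build the unitary
  set Mσ : Matrix (Fin d) (Fin d) ℂ := pmat σ with hMσdef
  have hMσ : Mσ * star Mσ = 1 := pmat_mul_star σ
  set V : Matrix (Fin d) (Fin d) ℂ := UP * Mσ * star UQ with hVdef
  have hstarV : star V = UQ * (star Mσ * star UP) := by
    rw [hVdef]
    simp only [star_mul, star_star, Matrix.mul_assoc]
  have hVunit : V ∈ Matrix.unitaryGroup (Fin d) ℂ := by
    rw [Matrix.mem_unitaryGroup_iff, hstarV]
    calc V * (UQ * (star Mσ * star UP))
        = UP * (Mσ * ((star UQ * UQ) * (star Mσ * star UP))) := by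
          rw [hVdef]; simp only [Matrix.mul_assoc]
      _ = UP * ((Mσ * star Mσ) * star UP) := by rw [hUQ, one_mul, Matrix.mul_assoc]
      _ = 1 := by rw [hMσ, one_mul, hUP']
  refine ⟨V, hVunit, ?_⟩
  have hconj : Mσ * Matrix.diagonal (fun k => (qE k : ℂ)) * star Mσ
      = Matrix.diagonal (fun k => (qE (σ k) : ℂ)) := pmat_conj_diag σ _
  have hVQV : V * Q * Vᴴ = UP * Matrix.diagonal (fun k => (qE (σ k) : ℂ)) * star UP := by
    rw [show Vᴴ = star V from rfl, hstarV, hQe, hVdef]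
    have e1 : UP * Mσ * star UQ * (UQ * Matrix.diagonal (fun k => (qE k : ℂ)) * star UQ)
          * (UQ * (star Mσ * star UP))
        = UP * (Mσ * ((star UQ * UQ) * (Matrix.diagonal (fun k => (qE k : ℂ))
            * ((star UQ * UQ) * (star Mσ * star UP))))) := by
      simp only [Matrix.mul_assoc]
    rw [e1, hUQ, one_mul, one_mul, ← hconj]
    simp only [Matrix.mul_assoc]
  show (V * Q * Vᴴ - P).PosSemidef
  rw [hVQV]
  have hsub : UP * Matrix.diagonal (fun k => (qE (σ k) : ℂ)) * star UP - P
      = UP * Matrix.diagonal (fun k => ((qE (σ k) - pE k : ℝ) : ℂ)) * star UP := by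
    conv_lhs => rw [hPe]
    rw [← Matrix.sub_mul, ← Matrix.mul_sub, Matrix.diagonal_sub]
    congr 2
    funext k
    push_cast
    ring
  rw [hsub]
  have hd : (Matrix.diagonal (fun k => ((qE (σ k) - pE k : ℝ) : ℂ))).PosSemidef :=
    Matrix.posSemidef_diagonal_iff.mpr fun k =>
      Complex.zero_le_real.2 (by have := hσ k; linarith)
  simpa [Matrix.star_eq_conjTranspose] using hd.mul_mul_conjTranspose_same UP
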